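/- Let A be a real M×N matrix with restricted isometry constants δ_m(A), and assume δ_k(A) < 1. Let x ∈ ℝ^N be s-sparse, e ∈ ℝ^M, λ > 0, let T be an index set with |T| = k, let v ∈ ℝ^N be supported on T, and let μ ∈ ℝ^N be the vector supported on T defined by μ = v + λ⁻¹·[A*(Ax + e − Av)]_T. Then ‖μ − x‖₂ ≤ (1 + (1+δ_k(A))·√(1+δ_{s+k}(A)) / (λ·√(1−δ_k(A)))) · ‖x − v‖₂ + ((1+δ_k(A)) / (λ·√(1−δ_k(A)))) · ‖e‖₂. -/

import Mathlib

open Matrix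

/-- The Euclidean (ℓ²) norm of a vector in ℝⁿ. -/
noncomputable def norm2 {n : ℕ} (x : Fin n → ℝ) : ℝ := Real.sqrt (∑ i, x i ^ 2)

/-- `x` is `s`-sparse: it has at most `s` nonzero entries. -/
def sparse {n : ℕ} (s : ℕ) (x : Fin n → ℝ) : Prop :=
  (Finset.univ.filter fun i => x i ≠ 0).card ≤ s

/-- `restrict T x` is the vector agreeing with `x` on `T` and zero outside `T`. -/
def restrict {n : ℕ} (T : Finset (Fin n)) (x : Fin n → ℝ) : Fin n → ℝ :=
  fun i => if i ∈ T then x i else 0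

/-- The preconditioned matrix `(AAᴴ)^{-1/2} A`, where `(AAᴴ)^{-1/2}` is the inverse of the
positive semidefinite square root of `AAᴴ`. -/
noncomputable def precond {M N : ℕ} (A : Matrix (Fin M) (Fin N) ℝ) :
    Matrix (Fin M) (Fin N) ℝ :=
  ((Matrix.posSemidef_self_mul_conjTranspose A).1.eigenvectorUnitary.1 *
    diagonal ((↑) ∘ (√·) ∘ (Matrix.posSemidef_self_mul_conjTranspose A).1.eigenvalues) *
    (star (Matrix.posSemidef_self_mul_conjTranspose A).1.eigenvectorUnitary :
      Matrix (Fin M) (Fin M) ℝ))⁻¹ * A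

/-- The preconditioned restricted isometry constant `γ_s(A)`: the smallest `γ ≥ 0` such that
`(1-γ)‖x‖₂² ≤ ‖(AAᴴ)^{-1/2}Ax‖₂²` for all `s`-sparse `x`. -/
noncomputable def pripConst {M N : ℕ} (A : Matrix (Fin M) (Fin N) ℝ) (s : ℕ) : ℝ :=
  sInf {γ : ℝ | 0 ≤ γ ∧ ∀ x : Fin N → ℝ, sparse s x →
    (1 - γ) * norm2 x ^ 2 ≤ norm2 ((precond A).mulVec x) ^ 2}

/-- The restricted isometry constant `δ_s(B)`: the smallest `δ ≥ 0` such that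
`(1-δ)‖x‖₂² ≤ ‖Bx‖₂² ≤ (1+δ)‖x‖₂²` for all `s`-sparse `x`. -/
noncomputable def ripConst {m n : ℕ} (B : Matrix (Fin m) (Fin n) ℝ) (s : ℕ) : ℝ :=
  sInf {δ : ℝ | 0 ≤ δ ∧ ∀ x : Fin n → ℝ, sparse s x →
    (1 - δ) * norm2 x ^ 2 ≤ norm2 (B.mulVec x) ^ 2 ∧
      norm2 (B.mulVec x) ^ 2 ≤ (1 + δ) * norm2 x ^ 2}

/-- `θ_t(A) = δ_t((AAᴴ)⁻¹A)`. -/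
noncomputable def thetaConst {M N : ℕ} (A : Matrix (Fin M) (Fin N) ℝ) (t : ℕ) : ℝ :=
  ripConst ((A * Aᴴ)⁻¹ * A) t

/- ### Auxiliary lemmas -/

lemma norm2_nonneg {n : ℕ} (x : Fin n → ℝ) : 0 ≤ norm2 x := Real.sqrt_nonneg _

lemma norm2_sq {n : ℕ} (x : Fin n → ℝ) : norm2 x ^ 2 = ∑ i, x i ^ 2 :=
  Real.sq_sqrt (Finset.sum_nonneg fun i _ => sq_nonneg _)

lemma norm2_smul {n : ℕ} (c : ℝ) (x : Fin n → ℝ) : norm2 (c • x) = |c| * norm2 x := by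
  unfold norm2
  simp only [Pi.smul_apply, smul_eq_mul, mul_pow]
  rw [← Finset.mul_sum, Real.sqrt_mul (sq_nonneg c), Real.sqrt_sq_eq_abs]

lemma norm2_neg {n : ℕ} (x : Fin n → ℝ) : norm2 (-x) = norm2 x := by
  unfold norm2; simp

lemma cs_sum {n : ℕ} (f g : Fin n → ℝ) : ∑ i, f i * g i ≤ norm2 f * norm2 g := by
  have h := Finset.sum_mul_sq_le_sq_mul_sq Finset.univ f g
  calc ∑ i, f i * g i ≤ |∑ i, f i * g i| := le_abs_self _
    _ = Real.sqrt ((∑ i, f i * g i) ^ 2) := (Real.sqrt_sq_eq_abs _).symm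
    _ ≤ Real.sqrt ((∑ i, f i ^ 2) * ∑ i, g i ^ 2) := Real.sqrt_le_sqrt h
    _ = norm2 f * norm2 g := by
        rw [Real.sqrt_mul (Finset.sum_nonneg fun i _ => sq_nonneg _)]; rfl

lemma norm2_add_le {n : ℕ} (x y : Fin n → ℝ) : norm2 (x + y) ≤ norm2 x + norm2 y := by
  have h : norm2 (x + y) ^ 2 ≤ (norm2 x + norm2 y) ^ 2 := by
    have hcs := cs_sum x y
    have h1 := norm2_sq (x + y)
    have h2 := norm2_sq x
    have h3 := norm2_sq y
    have hsum : ∑ i, (x + y) i ^ 2 = (∑ i, x i ^ 2) + 2 * (∑ i, x i * y i) + ∑ i, y i ^ 2 := by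
      rw [Finset.sum_congr rfl fun i (_ : i ∈ Finset.univ) =>
        show (x + y) i ^ 2 = x i ^ 2 + 2 * (x i * y i) + y i ^ 2 by
          simp only [Pi.add_apply]; ring]
      rw [Finset.sum_add_distrib, Finset.sum_add_distrib, ← Finset.mul_sum]
    nlinarith
  exact le_of_pow_le_pow_left₀ two_ne_zero (add_nonneg (norm2_nonneg x) (norm2_nonneg y)) h

lemma ripConst_spec {m n : ℕ} (B : Matrix (Fin m) (Fin n) ℝ) (s : ℕ) :
    0 ≤ ripConst B s ∧ ∀ x : Fin n → ℝ, sparse s x →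
      (1 - ripConst B s) * norm2 x ^ 2 ≤ norm2 (B.mulVec x) ^ 2 ∧
        norm2 (B.mulVec x) ^ 2 ≤ (1 + ripConst B s) * norm2 x ^ 2 := by
  set S : Set ℝ := {δ : ℝ | 0 ≤ δ ∧ ∀ x : Fin n → ℝ, sparse s x →
    (1 - δ) * norm2 x ^ 2 ≤ norm2 (B.mulVec x) ^ 2 ∧
      norm2 (B.mulVec x) ^ 2 ≤ (1 + δ) * norm2 x ^ 2} with hS
  have hne : S.Nonempty := by
    have hF : (0:ℝ) ≤ ∑ i, ∑ j, B i j ^ 2 :=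
      Finset.sum_nonneg fun i _ => Finset.sum_nonneg fun j _ => sq_nonneg _
    refine ⟨1 + ∑ i, ∑ j, B i j ^ 2, by linarith, fun x _ => ?_⟩
    have hupper : norm2 (B.mulVec x) ^ 2 ≤ (∑ i, ∑ j, B i j ^ 2) * norm2 x ^ 2 := by
      rw [norm2_sq, norm2_sq, Finset.sum_mul]
      refine Finset.sum_le_sum fun i _ => ?_
      have : (B.mulVec x) i = ∑ j, B i j * x j := by
        simp [Matrix.mulVec, dotProduct]
      rw [this]
      exact Finset.sum_mul_sq_le_sq_mul_sq Finset.univ _ _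
    constructor
    · nlinarith [sq_nonneg (norm2 x), sq_nonneg (norm2 (B.mulVec x)),
        Finset.sum_nonneg (fun i (_ : i ∈ Finset.univ) =>
          Finset.sum_nonneg fun j (_ : j ∈ Finset.univ) => sq_nonneg (B i j))]
    · nlinarith [sq_nonneg (norm2 x)]
  have hbdd : BddBelow S := ⟨0, fun δ hδ => hδ.1⟩
  have hclosed : IsClosed S := by
    have : S = {δ : ℝ | 0 ≤ δ} ∩ ⋂ (x : {x : Fin n → ℝ // sparse s x}),
        ({δ : ℝ | (1 - δ) * norm2 x.1 ^ 2 ≤ norm2 (B.mulVec x.1) ^ 2} ∩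
         {δ : ℝ | norm2 (B.mulVec x.1) ^ 2 ≤ (1 + δ) * norm2 x.1 ^ 2}) := by
      ext δ
      simp only [hS, Set.mem_setOf_eq, Set.mem_inter_iff, Set.mem_iInter, Subtype.forall]
    rw [this]
    apply IsClosed.inter
    · exact isClosed_le continuous_const continuous_id
    · refine isClosed_iInter fun x => IsClosed.inter ?_ ?_
      · exact isClosed_le ((continuous_const.sub continuous_id).mul continuous_const)
          continuous_const
      · exact isClosed_le continuous_const
          ((continuous_const.add continuous_id).mul continuous_const)
  have hmem := hclosed.csInf_mem hne hbdd
  rw [hS] at hmem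
  exact hmem

lemma sparse_restrict {n : ℕ} (T : Finset (Fin n)) (x : Fin n → ℝ) :
    sparse T.card (restrict T x) := by
  unfold sparse restrict
  refine Finset.card_le_card fun i hi => ?_
  simp only [Finset.mem_filter] at hi
  by_contra h
  exact hi.2 (by simp [h])

lemma mono_sparse {n : ℕ} {s t : ℕ} {x : Fin n → ℝ} (h : sparse s x) (hst : s ≤ t) :
    sparse t x := le_trans h hst

lemma sparse_sub {n : ℕ} {s k : ℕ} {x v : Fin n → ℝ} (hx : sparse s x)
    (T : Finset (Fin n)) (hT : T.card = k) (hv : ∀ i ∉ T, v i = 0) :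
    sparse (s + k) (x - v) := by
  unfold sparse
  have hsub : (Finset.univ.filter fun i => (x - v) i ≠ 0) ⊆
      (Finset.univ.filter fun i => x i ≠ 0) ∪ T := by
    intro i hi
    simp only [Finset.mem_filter, Finset.mem_univ, true_and, Pi.sub_apply] at hi
    by_contra h
    simp only [Finset.mem_union, Finset.mem_filter, Finset.mem_univ, true_and, not_or,
      not_not] at h
    exact hi (by rw [h.1, hv i h.2]; ring)
  calc (Finset.univ.filter fun i => (x - v) i ≠ 0).card
      ≤ ((Finset.univ.filter fun i => x i ≠ 0) ∪ T).card := Finset.card_le_card hsub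
    _ ≤ (Finset.univ.filter fun i => x i ≠ 0).card + T.card := Finset.card_union_le _ _
    _ ≤ s + k := add_le_add hx hT.le

theorem stmt7 {M N : ℕ} (A : Matrix (Fin M) (Fin N) ℝ)
    (s k : ℕ) (hδ : ripConst A k < 1)
    (x : Fin N → ℝ) (hx : sparse s x) (e : Fin M → ℝ)
    (lam : ℝ) (hlam : 0 < lam)
    (T : Finset (Fin N)) (hT : T.card = k)
    (v : Fin N → ℝ) (hv : ∀ i ∉ T, v i = 0)
    (μ : Fin N → ℝ)
    (hμ : μ = v + lam⁻¹ • restrict T (Aᴴ.mulVec (A.mulVec x + e - A.mulVec v))) :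
    norm2 (μ - x) ≤
      (1 + (1 + ripConst A k) * Real.sqrt (1 + ripConst A (s + k)) /
        (lam * Real.sqrt (1 - ripConst A k))) * norm2 (x - v) +
      (1 + ripConst A k) / (lam * Real.sqrt (1 - ripConst A k)) * norm2 e := by
  obtain ⟨hδk0, hripk⟩ := ripConst_spec A k
  obtain ⟨hδsk0, hripsk⟩ := ripConst_spec A (s + k)
  set δk := ripConst A k
  set δsk := ripConst A (s + k)
  set w : Fin M → ℝ := A.mulVec x + e - A.mulVec v with hw
  set u : Fin N → ℝ := restrict T (Aᴴ.mulVec w) with hu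
  -- w = A (x - v) + e
  have hw2 : w = A.mulVec (x - v) + e := by
    rw [hw, Matrix.mulVec_sub]; abel
  -- u is k-sparse
  have husp : sparse k u := by
    have := sparse_restrict T (Aᴴ.mulVec w)
    rwa [hT] at this
  -- key bound: ‖u‖ ≤ √(1+δk) ‖w‖
  have hkey : norm2 u ≤ Real.sqrt (1 + δk) * norm2 w := by
    have h1 : norm2 u ^ 2 = ∑ i, u i * (Aᴴ.mulVec w) i := by
      rw [norm2_sq]
      refine Finset.sum_congr rfl fun i _ => ?_
      by_cases hi : i ∈ T <;> simp [hu, restrict, hi, sq]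
    have h2 : ∑ i, u i * (Aᴴ.mulVec w) i = ∑ j, (A.mulVec u) j * w j := by
      simp only [Matrix.mulVec, dotProduct, Matrix.conjTranspose_apply, star,
        Finset.mul_sum, Finset.sum_mul]
      rw [Finset.sum_comm]
      exact Finset.sum_congr rfl fun j _ => Finset.sum_congr rfl fun i _ => by ring
    have h3 : ∑ j, (A.mulVec u) j * w j ≤ norm2 (A.mulVec u) * norm2 w := cs_sum _ _
    have h4 : norm2 (A.mulVec u) ≤ Real.sqrt (1 + δk) * norm2 u := by
      have := (hripk u husp).2
      have h5 : norm2 (A.mulVec u) = Real.sqrt (norm2 (A.mulVec u) ^ 2) :=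
        (Real.sqrt_sq (norm2_nonneg _)).symm
      rw [h5]
      calc Real.sqrt (norm2 (A.mulVec u) ^ 2) ≤ Real.sqrt ((1 + δk) * norm2 u ^ 2) :=
            Real.sqrt_le_sqrt this
        _ = Real.sqrt (1 + δk) * norm2 u := by
            rw [Real.sqrt_mul (by linarith), Real.sqrt_sq (norm2_nonneg _)]
    have h6 : norm2 u ^ 2 ≤ Real.sqrt (1 + δk) * norm2 u * norm2 w := by
      calc norm2 u ^ 2 = ∑ i, u i * (Aᴴ.mulVec w) i := h1
        _ = ∑ j, (A.mulVec u) j * w j := h2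
        _ ≤ norm2 (A.mulVec u) * norm2 w := h3
        _ ≤ Real.sqrt (1 + δk) * norm2 u * norm2 w :=
            mul_le_mul_of_nonneg_right h4 (norm2_nonneg _)
    rcases eq_or_lt_of_le (norm2_nonneg u) with h | h
    · rw [← h]; exact mul_nonneg (Real.sqrt_nonneg _) (norm2_nonneg _)
    · nlinarith
  -- bound ‖w‖
  have hAxv : norm2 (A.mulVec (x - v)) ≤ Real.sqrt (1 + δsk) * norm2 (x - v) := by
    have hsp := sparse_sub hx T hT hv
    have := (hripsk (x - v) hsp).2
    have h5 : norm2 (A.mulVec (x - v)) = Real.sqrt (norm2 (A.mulVec (x - v)) ^ 2) :=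
      (Real.sqrt_sq (norm2_nonneg _)).symm
    rw [h5]
    calc Real.sqrt (norm2 (A.mulVec (x - v)) ^ 2) ≤ Real.sqrt ((1 + δsk) * norm2 (x - v) ^ 2) :=
          Real.sqrt_le_sqrt this
      _ = Real.sqrt (1 + δsk) * norm2 (x - v) := by
          rw [Real.sqrt_mul (by linarith), Real.sqrt_sq (norm2_nonneg _)]
  have hwbound : norm2 w ≤ Real.sqrt (1 + δsk) * norm2 (x - v) + norm2 e := by
    rw [hw2]
    calc norm2 (A.mulVec (x - v) + e) ≤ norm2 (A.mulVec (x - v)) + norm2 e :=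
          norm2_add_le _ _
      _ ≤ Real.sqrt (1 + δsk) * norm2 (x - v) + norm2 e := by linarith
  -- decompose μ - x
  have hdecomp : μ - x = (v - x) + lam⁻¹ • u := by
    rw [hμ]; ext i; simp [hu]; ring
  have hvx : norm2 (v - x) = norm2 (x - v) := by
    rw [show v - x = -(x - v) by abel, norm2_neg]
  have hstep1 : norm2 (μ - x) ≤ norm2 (x - v) + lam⁻¹ * norm2 u := by
    rw [hdecomp]
    calc norm2 ((v - x) + lam⁻¹ • u) ≤ norm2 (v - x) + norm2 (lam⁻¹ • u) := norm2_add_le _ _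
      _ = norm2 (x - v) + lam⁻¹ * norm2 u := by
          rw [hvx, norm2_smul, abs_of_pos (inv_pos.mpr hlam)]
  -- comparison of constants
  have hs' : 0 < Real.sqrt (1 - δk) := Real.sqrt_pos.mpr (by linarith)
  have hcomp : Real.sqrt (1 + δk) ≤ (1 + δk) / Real.sqrt (1 - δk) := by
    rw [le_div_iff₀ hs']
    have h1 : Real.sqrt (1 - δk) ≤ 1 := Real.sqrt_le_one.mpr (by linarith)
    have h2 : Real.sqrt (1 + δk) ≤ 1 + δk := by
      have : (1 : ℝ) + δk ≤ (1 + δk) ^ 2 := by nlinarith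
      calc Real.sqrt (1 + δk) ≤ Real.sqrt ((1 + δk) ^ 2) := Real.sqrt_le_sqrt this
        _ = 1 + δk := Real.sqrt_sq (by linarith)
    nlinarith [Real.sqrt_nonneg (1 + δk), Real.sqrt_nonneg (1 - δk)]
  -- assemble
  have hub : lam⁻¹ * norm2 u ≤
      (1 + δk) / (lam * Real.sqrt (1 - δk)) * (Real.sqrt (1 + δsk) * norm2 (x - v) + norm2 e) := by
    have h7 : norm2 u ≤ Real.sqrt (1 + δk) * (Real.sqrt (1 + δsk) * norm2 (x - v) + norm2 e) := by
      calc norm2 u ≤ Real.sqrt (1 + δk) * norm2 w := hkey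
        _ ≤ Real.sqrt (1 + δk) * (Real.sqrt (1 + δsk) * norm2 (x - v) + norm2 e) :=
            mul_le_mul_of_nonneg_left hwbound (Real.sqrt_nonneg _)
    have hq : (0:ℝ) ≤ Real.sqrt (1 + δsk) * norm2 (x - v) + norm2 e := by
      have := norm2_nonneg (x - v); have := norm2_nonneg e
      positivity
    calc lam⁻¹ * norm2 u
        ≤ lam⁻¹ * (Real.sqrt (1 + δk) * (Real.sqrt (1 + δsk) * norm2 (x - v) + norm2 e)) :=
          mul_le_mul_of_nonneg_left h7 (by positivity)
      _ = (lam⁻¹ * Real.sqrt (1 + δk)) * (Real.sqrt (1 + δsk) * norm2 (x - v) + norm2 e) := by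
          ring
      _ ≤ (1 + δk) / (lam * Real.sqrt (1 - δk)) * (Real.sqrt (1 + δsk) * norm2 (x - v) + norm2 e) := by
          refine mul_le_mul_of_nonneg_right ?_ hq
          rw [show (1 + δk) / (lam * Real.sqrt (1 - δk)) = lam⁻¹ * ((1 + δk) / Real.sqrt (1 - δk))
            by field_simp]
          exact mul_le_mul_of_nonneg_left hcomp (by positivity)
    
  calc norm2 (μ - x) ≤ norm2 (x - v) + lam⁻¹ * norm2 u := hstep1
    _ ≤ norm2 (x - v) + (1 + δk) / (lam * Real.sqrt (1 - δk)) *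
        (Real.sqrt (1 + δsk) * norm2 (x - v) + norm2 e) := by linarith
    _ = (1 + (1 + δk) * Real.sqrt (1 + δsk) / (lam * Real.sqrt (1 - δk))) * norm2 (x - v) +
        (1 + δk) / (lam * Real.sqrt (1 - δk)) * norm2 e := by ring
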